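/- Let c ∈ (0,1] and let μ be a Borel probability measure on [0,∞) with ∫ log(1+x) dμ(x) < ∞. Then [μ]_c = B(c) · inf_{r>0} { r^{−(1−c)/c} · exp( c⁻¹ ∫ log(x+r) dμ(x) ) }. Furthermore, if μ({0}) < 1 − c, then this infimum is attained at the unique solution ρ ∈ (0,∞) of the equation ∫ x/(x+ρ) dμ(x) = c. -/

import Mathlib

open MeasureTheory Filter Topology
open scoped ENNReal

noncomputable def elogr (t : ℝ) : EReal := if t ≤ 0 then ⊥ else ((Real.log t : ℝ) : EReal)

/-- The Halász–Székely kernel, with values in `[-∞, +∞)` (`EReal`). -/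
noncomputable def hsKernel (c x y : ℝ) : EReal :=
  if c = 0 then ((Real.log y + y⁻¹ * x - 1 : ℝ) : EReal)
  else ((Real.log y : ℝ) : EReal) + ((c⁻¹ : ℝ) : EReal) * elogr (c * y⁻¹ * x + 1 - c)

/-- The nonnegative part of an extended real, as an element of `[0,∞]`. -/
noncomputable def erealToENNReal (x : EReal) : ℝ≥0∞ :=
  if x = ⊤ then ⊤ else ENNReal.ofReal x.toReal

/-- Integral of an `EReal`-valued function: positive part minus negative part. -/
noncomputable def eIntegral (μ : Measure ℝ) (f : ℝ → EReal) : EReal :=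
  ((∫⁻ x, erealToENNReal (f x) ∂μ : ℝ≥0∞) : EReal) - ((∫⁻ x, erealToENNReal (-f x) ∂μ : ℝ≥0∞) : EReal)

/-- Exponential on `EReal`, with values in `[0,∞]`. -/
noncomputable def eexp (x : EReal) : ℝ≥0∞ :=
  if x = ⊤ then ⊤ else if x = ⊥ then 0 else ENNReal.ofReal (Real.exp x.toReal)

/-- The Halász–Székely barycenter `[μ]_c ∈ [0,∞]`. -/
noncomputable def hsBary (c : ℝ) (μ : Measure ℝ) : ℝ≥0∞ :=
  eexp (⨅ y : {y : ℝ // 0 < y}, eIntegral μ (fun x => hsKernel c x y))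

/-- The function `B`. -/
noncomputable def hsB (c : ℝ) : ℝ :=
  if c = 0 then 0 else if c = 1 then 1 else c * (1 - c) ^ ((1 - c) / c)

/-- The uniform probability measure on the entries of a tuple. -/
noncomputable def unifMeasure {n : ℕ} (x : Fin n → ℝ) : Measure ℝ :=
  (n : ℝ≥0∞)⁻¹ • ∑ i, MeasureTheory.Measure.dirac (x i)

/-- The Halász–Székely mean of a tuple. -/
noncomputable def hsMean (c : ℝ) {n : ℕ} (x : Fin n → ℝ) : ℝ≥0∞ := hsBary c (unifMeasure x)

/-- The `k`-th symmetric mean of an `n`-tuple. -/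
noncomputable def symMean {n : ℕ} (k : ℕ) (x : Fin n → ℝ) : ℝ :=
  ((∑ s ∈ Finset.univ.powersetCard k, ∏ i ∈ s, x i) / (n.choose k)) ^ ((k : ℝ)⁻¹)


lemma ennreal_coe_eq_real_coe {a : ℝ≥0∞} (ha : a ≠ ⊤) : (a : EReal) = ((a.toReal : ℝ) : EReal) := by
  conv_lhs => rw [← ENNReal.ofReal_toReal ha]
  rw [EReal.coe_ennreal_ofReal, max_eq_left ENNReal.toReal_nonneg]

lemma coe_ennreal_sub_eq {a b : ℝ≥0∞} (ha : a ≠ ⊤) (hb : b ≠ ⊤) :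
    (a : EReal) - (b : EReal) = ((a.toReal - b.toReal : ℝ) : EReal) := by
  rw [ennreal_coe_eq_real_coe ha, ennreal_coe_eq_real_coe hb, ← EReal.coe_sub]

lemma erealToENNReal_coe (r : ℝ) : erealToENNReal (r : EReal) = ENNReal.ofReal r := by
  simp [erealToENNReal]

lemma lintegral_ofReal_ne_top {μ : Measure ℝ} {f : ℝ → ℝ} (hf : Integrable f μ) :
    (∫⁻ x, ENNReal.ofReal (f x) ∂μ) ≠ ⊤ := by
  refine (lt_of_le_of_lt (lintegral_mono fun x => Real.ofReal_le_enorm (f x))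
    hf.hasFiniteIntegral).ne

lemma eIntegral_congr_ae {μ : Measure ℝ} {f g : ℝ → EReal} (h : f =ᵐ[μ] g) :
    eIntegral μ f = eIntegral μ g := by
  unfold eIntegral
  rw [lintegral_congr_ae (h.mono fun x hx => by simp only [hx] :
      (fun x => erealToENNReal (f x)) =ᵐ[μ] fun x => erealToENNReal (g x)),
    lintegral_congr_ae (h.mono fun x hx => by simp only [hx] :
      (fun x => erealToENNReal (-f x)) =ᵐ[μ] fun x => erealToENNReal (-g x))]

lemma eIntegral_coe {μ : Measure ℝ} {f : ℝ → ℝ} (hf : Integrable f μ) :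
    eIntegral μ (fun x => (f x : EReal)) = ((∫ x, f x ∂μ : ℝ) : EReal) := by
  unfold eIntegral
  have h2 : ∀ x, erealToENNReal (-(f x : EReal)) = ENNReal.ofReal (-(f x)) := by
    intro x; rw [← EReal.coe_neg]; exact erealToENNReal_coe _
  simp only [erealToENNReal_coe, h2]
  have hb : (∫⁻ x, ENNReal.ofReal (-f x) ∂μ) ≠ ⊤ := lintegral_ofReal_ne_top hf.neg
  rw [coe_ennreal_sub_eq (lintegral_ofReal_ne_top hf) hb,
    EReal.coe_eq_coe_iff]
  rw [integral_eq_lintegral_pos_part_sub_lintegral_neg_part hf]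

lemma eexp_bot : eexp ⊥ = 0 := by simp [eexp]

lemma eexp_coe (t : ℝ) : eexp ((t : ℝ) : EReal) = ENNReal.ofReal (Real.exp t) := by
  simp [eexp]

lemma eexp_iInf {ι : Sort*} [Nonempty ι] (F : ι → ℝ) :
    eexp (⨅ i, ((F i : ℝ) : EReal)) = ENNReal.ofReal (⨅ i, Real.exp (F i)) := by
  set I := ⨅ i, ((F i : ℝ) : EReal) with hI
  by_cases hbot : I = ⊥
  · rw [hbot, eexp_bot]
    symm
    rw [ENNReal.ofReal_eq_zero]
    by_contra hpos
    push_neg at hpos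
    have hlb : ∀ i, Real.log (⨅ j, Real.exp (F j)) ≤ F i := by
      intro i
      have h1 : (⨅ j, Real.exp (F j)) ≤ Real.exp (F i) :=
        ciInf_le ⟨0, fun z hz => by obtain ⟨j, rfl⟩ := hz; exact (Real.exp_pos _).le⟩ i
      calc Real.log (⨅ j, Real.exp (F j)) ≤ Real.log (Real.exp (F i)) :=
            Real.log_le_log (by positivity) h1
        _ = F i := Real.log_exp _
    have : ((Real.log (⨅ j, Real.exp (F j)) : ℝ) : EReal) ≤ I :=
      le_iInf fun i => EReal.coe_le_coe_iff.2 (hlb i)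
    rw [hbot] at this
    exact absurd (le_bot_iff.1 this) (EReal.coe_ne_bot _)
  · have htop : I ≠ ⊤ :=
      ((iInf_le _ (Classical.arbitrary ι)).trans_lt (EReal.coe_lt_top _)).ne
    obtain ⟨t, ht⟩ : ∃ t : ℝ, I = (t : EReal) := ⟨I.toReal, (EReal.coe_toReal htop hbot).symm⟩
    have hlbF : ∀ i, t ≤ F i := fun i =>
      EReal.coe_le_coe_iff.1 (ht ▸ iInf_le (fun i => ((F i : ℝ) : EReal)) i)
    have hbdd : BddBelow (Set.range F) := ⟨t, fun z hz => by obtain ⟨i, rfl⟩ := hz; exact hlbF i⟩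
    have ht2 : t = ⨅ i, F i := by
      refine le_antisymm (le_ciInf hlbF) ?_
      have : ((⨅ i, F i : ℝ) : EReal) ≤ I := le_iInf fun i => EReal.coe_le_coe_iff.2 (ciInf_le hbdd i)
      rw [ht] at this
      exact EReal.coe_le_coe_iff.1 this
    rw [ht, eexp_coe, ht2]
    congr 1
    exact Real.exp_monotone.map_ciInf_of_continuousAt (Real.continuous_exp.continuousAt) hbdd

lemma ciInf_comp_surj {β γ : Sort*} {f : β → ℝ} {e : γ → β} (he : Function.Surjective e) :
    ⨅ b, f b = ⨅ c, f (e c) := by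
  rw [← sInf_range, ← sInf_range]
  congr 1
  ext y
  constructor
  · rintro ⟨b, rfl⟩
    obtain ⟨c, rfl⟩ := he b
    exact ⟨c, rfl⟩
  · rintro ⟨c, rfl⟩
    exact ⟨e c, rfl⟩

-- a.e. nonneg from hsupp
lemma ae_nonneg_of_Iio {μ : Measure ℝ} (hsupp : μ (Set.Iio 0) = 0) : ∀ᵐ x ∂μ, 0 ≤ x := by
  have : ∀ᵐ x ∂μ, x ∉ Set.Iio 0 := ae_iff.2 (measure_mono_null (fun x hx => by simpa using hx) hsupp)
  exact this.mono fun x hx => not_lt.1 hx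

-- general integrability of log(a x + b)
lemma integrable_log_affine {μ : Measure ℝ} [IsProbabilityMeasure μ]
    (hsupp : μ (Set.Iio 0) = 0) (hint : Integrable (fun x => Real.log (1 + x)) μ)
    {a b : ℝ} (ha : 0 < a) (hb : 0 < b) :
    Integrable (fun x => Real.log (a * x + b)) μ := by
  set C : ℝ := max a (max b 1) with hC
  have hC1 : (1 : ℝ) ≤ C := le_max_of_le_right (le_max_right _ _)
  have hCa : a ≤ C := le_max_left _ _
  have hCb : b ≤ C := le_max_of_le_right (le_max_left _ _)
  have hbint : Integrable (fun x => |Real.log b| + Real.log C + Real.log (1 + x)) μ :=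
    (integrable_const (|Real.log b| + Real.log C)).add hint
  refine Integrable.mono' hbint ?meas ?bound
  case meas =>
    exact (Real.measurable_log.comp (by fun_prop)).aestronglyMeasurable
  case bound =>
    filter_upwards [ae_nonneg_of_Iio hsupp] with x hx
    have hx1 : (0:ℝ) < a * x + b := by positivity
    rw [Real.norm_eq_abs, abs_le]
    constructor
    · have h1 : Real.log b ≤ Real.log (a * x + b) :=
        Real.log_le_log hb (by nlinarith)
      have h2 : (0:ℝ) ≤ Real.log C := Real.log_nonneg hC1
      have h3 : (0:ℝ) ≤ Real.log (1 + x) := Real.log_nonneg (by linarith)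
      have h4 : -|Real.log b| ≤ Real.log b := neg_abs_le _
      linarith
    · have h1 : Real.log (a * x + b) ≤ Real.log (C * (1 + x)) := by
        apply Real.log_le_log hx1
        nlinarith
      have h2 : Real.log (C * (1 + x)) = Real.log C + Real.log (1 + x) :=
        Real.log_mul (by linarith) (by linarith)
      have h4 : (0:ℝ) ≤ |Real.log b| := abs_nonneg _
      linarith

lemma hsKernel_eq_coe {c x y : ℝ} (hc : 0 < c) (hc1 : c < 1) (hy : 0 < y) (hx : 0 ≤ x) :
    hsKernel c x y = ((Real.log y + c⁻¹ * Real.log (c * y⁻¹ * x + 1 - c) : ℝ) : EReal) := by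
  have harg : (0:ℝ) < c * y⁻¹ * x + 1 - c := by
    have : (0:ℝ) ≤ c * y⁻¹ * x := by positivity
    linarith
  rw [hsKernel, if_neg hc.ne', elogr, if_neg (not_le.2 harg), ← EReal.coe_mul, ← EReal.coe_add]

lemma eIntegral_hsKernel {μ : Measure ℝ} [IsProbabilityMeasure μ]
    (hsupp : μ (Set.Iio 0) = 0) (hint : Integrable (fun x => Real.log (1 + x)) μ)
    {c y : ℝ} (hc : 0 < c) (hc1 : c < 1) (hy : 0 < y) :
    eIntegral μ (fun x => hsKernel c x y) =
      ((Real.log y + c⁻¹ * ∫ x, Real.log (c * y⁻¹ * x + 1 - c) ∂μ : ℝ) : EReal) := by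
  have hInt : Integrable (fun x => Real.log (c * y⁻¹ * x + 1 - c)) μ := by
    have h := integrable_log_affine hsupp hint (a := c * y⁻¹) (b := 1 - c)
      (by positivity) (by linarith)
    refine h.congr (Filter.Eventually.of_forall fun x => ?_)
    simp only []
    rw [show c * y⁻¹ * x + (1 - c) = c * y⁻¹ * x + 1 - c by ring]
  have h1 : eIntegral μ (fun x => hsKernel c x y)
      = eIntegral μ (fun x => ((Real.log y + c⁻¹ * Real.log (c * y⁻¹ * x + 1 - c) : ℝ) : EReal)) := by
    refine eIntegral_congr_ae ?_
    filter_upwards [ae_nonneg_of_Iio hsupp] with x hx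
    exact hsKernel_eq_coe hc hc1 hy hx
  have hG : Integrable (fun x => Real.log y + c⁻¹ * Real.log (c * y⁻¹ * x + 1 - c)) μ :=
    (integrable_const (Real.log y)).add (hInt.const_mul c⁻¹)
  rw [h1, eIntegral_coe hG]
  congr 1
  rw [integral_add (integrable_const _) (hInt.const_mul c⁻¹), integral_const,
    integral_const_mul]
  simp

lemma exp_F_eq {μ : Measure ℝ} [IsProbabilityMeasure μ]
    (hsupp : μ (Set.Iio 0) = 0) (hint : Integrable (fun x => Real.log (1 + x)) μ)
    {c r : ℝ} (hc : 0 < c) (hc1 : c < 1) (hr : 0 < r) :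
    Real.exp (Real.log (c * r / (1 - c)) +
        c⁻¹ * ∫ x, Real.log (c * (c * r / (1 - c))⁻¹ * x + 1 - c) ∂μ) =
      hsB c * (r ^ (-(1 - c) / c) * Real.exp (c⁻¹ * ∫ x, Real.log (x + r) ∂μ)) := by
  have h1c : (0:ℝ) < 1 - c := by linarith
  have hy : (0:ℝ) < c * r / (1 - c) := by positivity
  -- rewrite the inner coefficient
  have hcoef : c * (c * r / (1 - c))⁻¹ = (1 - c) / r := by
    field_simp
  have hintJ : Integrable (fun x => Real.log (x + r)) μ := by
    have := integrable_log_affine hsupp hint one_pos hr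
    simpa using this
  -- integral identity
  have hii : (∫ x, Real.log (c * (c * r / (1 - c))⁻¹ * x + 1 - c) ∂μ)
      = Real.log ((1 - c) / r) + ∫ x, Real.log (x + r) ∂μ := by
    rw [hcoef]
    have hae : (fun x => Real.log ((1 - c) / r * x + 1 - c))
        =ᵐ[μ] fun x => Real.log ((1 - c) / r) + Real.log (x + r) := by
      filter_upwards [ae_nonneg_of_Iio hsupp] with x hx
      have : (1 - c) / r * x + 1 - c = (1 - c) / r * (x + r) := by
        field_simp; ring
      rw [this, Real.log_mul (by positivity) (by positivity)]
    rw [integral_congr_ae hae, integral_add (integrable_const _) hintJ, integral_const]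
    simp
  rw [hii]
  -- now pure algebra; take logs
  have hB : (0:ℝ) < hsB c := by
    rw [hsB, if_neg hc.ne', if_neg (by linarith : c ≠ 1)]
    positivity
  have hRHSpos : (0:ℝ) < hsB c * (r ^ (-(1 - c) / c) * Real.exp (c⁻¹ * ∫ x, Real.log (x + r) ∂μ)) := by
    have : (0:ℝ) < r ^ (-(1 - c) / c) := Real.rpow_pos_of_pos hr _
    positivity
  rw [← Real.exp_log hRHSpos]
  congr 1
  rw [Real.log_mul hB.ne' (by positivity), Real.log_mul (Real.rpow_pos_of_pos hr _).ne'
    (Real.exp_pos _).ne', Real.log_exp, Real.log_rpow hr]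
  have hlogB : Real.log (hsB c) = Real.log c + (1 - c) / c * Real.log (1 - c) := by
    rw [hsB, if_neg hc.ne', if_neg (by linarith : c ≠ 1), Real.log_mul hc.ne'
      (Real.rpow_pos_of_pos h1c _).ne', Real.log_rpow h1c]
  have hlogy : Real.log (c * r / (1 - c)) = Real.log c + Real.log r - Real.log (1 - c) := by
    rw [Real.log_div (by positivity) h1c.ne', Real.log_mul hc.ne' hr.ne']
  have hlogq : Real.log ((1 - c) / r) = Real.log (1 - c) - Real.log r :=
    Real.log_div h1c.ne' hr.ne'
  rw [hlogB, hlogy, hlogq]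
  field_simp
  ring

lemma part1_lt {μ : Measure ℝ} [IsProbabilityMeasure μ]
    (hsupp : μ (Set.Iio 0) = 0) (hint : Integrable (fun x => Real.log (1 + x)) μ)
    {c : ℝ} (hc : 0 < c) (hc1 : c < 1) :
    hsBary c μ = ENNReal.ofReal (hsB c *
      ⨅ r : {r : ℝ // 0 < r},
        (r : ℝ) ^ (-(1 - c) / c) * Real.exp (c⁻¹ * ∫ x, Real.log (x + r) ∂μ)) := by
  have h1c : (0:ℝ) < 1 - c := by linarith
  have : Nonempty {y : ℝ // 0 < y} := ⟨⟨1, one_pos⟩⟩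
  set F : {y : ℝ // 0 < y} → ℝ :=
    fun y => Real.log y + c⁻¹ * ∫ x, Real.log (c * (y:ℝ)⁻¹ * x + 1 - c) ∂μ with hF
  set g : {r : ℝ // 0 < r} → ℝ :=
    fun r => (r : ℝ) ^ (-(1 - c) / c) * Real.exp (c⁻¹ * ∫ x, Real.log (x + r) ∂μ) with hg
  have step1 : hsBary c μ = eexp (⨅ y : {y : ℝ // 0 < y}, ((F y : ℝ) : EReal)) := by
    rw [hsBary]
    congr 1
    exact iInf_congr fun y => eIntegral_hsKernel hsupp hint hc hc1 y.2
  rw [step1, eexp_iInf]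
  congr 1
  -- reindex
  set e : {r : ℝ // 0 < r} → {y : ℝ // 0 < y} :=
    fun r => ⟨c * r / (1 - c), div_pos (mul_pos hc r.2) h1c⟩ with he
  have hesurj : Function.Surjective e := by
    rintro ⟨y, hy⟩
    refine ⟨⟨(1 - c) * y / c, by positivity⟩, ?_⟩
    simp only [he, Subtype.mk.injEq]
    field_simp
  rw [ciInf_comp_surj (f := fun y => Real.exp (F y)) hesurj]
  have heq : ∀ r : {r : ℝ // 0 < r}, Real.exp (F (e r)) = hsB c * g r := by
    intro r
    exact exp_F_eq hsupp hint hc hc1 r.2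
  rw [iInf_congr heq]
  have hbdd : BddBelow (Set.range g) := by
    refine ⟨0, fun z hz => ?_⟩
    obtain ⟨r, rfl⟩ := hz
    have : (0:ℝ) < (r:ℝ) ^ (-(1 - c) / c) := Real.rpow_pos_of_pos r.2 _
    positivity
  have hBpos : (0:ℝ) < hsB c := by
    rw [hsB, if_neg hc.ne', if_neg (by linarith : c ≠ 1)]
    positivity
  symm
  exact Monotone.map_ciInf_of_continuousAt
    (f := fun t : ℝ => hsB c * t)
    (continuous_const.mul continuous_id).continuousAt
    (fun a b hab => mul_le_mul_of_nonneg_left hab hBpos.le) hbdd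

lemma erealToENNReal_bot : erealToENNReal ⊥ = 0 := by simp [erealToENNReal]
lemma erealToENNReal_top : erealToENNReal (⊤ : EReal) = ⊤ := by simp [erealToENNReal]

lemma ereal_iInf_coe {ι : Sort*} [Nonempty ι] {F : ι → ℝ} (h : BddBelow (Set.range F)) :
    ⨅ i, ((F i : ℝ) : EReal) = ((⨅ i, F i : ℝ) : EReal) := by
  refine le_antisymm ?_ (le_iInf fun i => EReal.coe_le_coe_iff.2 (ciInf_le h i))
  obtain ⟨t0, ht0⟩ := h
  set I := ⨅ i, ((F i : ℝ) : EReal) with hI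
  have hbot : ((t0 : ℝ) : EReal) ≤ I :=
    le_iInf fun i => EReal.coe_le_coe_iff.2 (ht0 ⟨i, rfl⟩)
  have htop : I ≠ ⊤ := ((iInf_le _ (Classical.arbitrary ι)).trans_lt (EReal.coe_lt_top _)).ne
  have hbot' : I ≠ ⊥ := fun h => by
    rw [h] at hbot; exact absurd (le_bot_iff.1 hbot) (EReal.coe_ne_bot _)
  obtain ⟨t, ht⟩ : ∃ t : ℝ, I = (t : EReal) := ⟨I.toReal, (EReal.coe_toReal htop hbot').symm⟩
  rw [ht, EReal.coe_le_coe_iff]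
  exact le_ciInf fun i => EReal.coe_le_coe_iff.1 (ht ▸ iInf_le (fun i => ((F i : ℝ) : EReal)) i)

lemma integrable_log_add {μ : Measure ℝ} [IsProbabilityMeasure μ]
    (hsupp : μ (Set.Iio 0) = 0) (hint : Integrable (fun x => Real.log (1 + x)) μ)
    {r : ℝ} (hr : 0 < r) : Integrable (fun x => Real.log (x + r)) μ := by
  have h := integrable_log_affine hsupp hint (a := 1) (b := r) one_pos hr
  refine h.congr (Filter.Eventually.of_forall fun x => ?_)
  simp only []
  rw [one_mul]

lemma hsKernel_one {x y : ℝ} (hy : 0 < y) (hx : 0 ≤ x) : hsKernel 1 x y = elogr x := by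
  rw [hsKernel, if_neg one_ne_zero]
  have harg : (1:ℝ) * y⁻¹ * x + 1 - 1 = y⁻¹ * x := by ring
  rw [harg]
  rcases eq_or_lt_of_le hx with hx0 | hxpos
  · rw [← hx0]
    have : y⁻¹ * 0 = (0:ℝ) := mul_zero _
    rw [this]
    unfold elogr
    rw [if_pos le_rfl]
    simp only [inv_one, EReal.coe_one, one_mul]
    exact EReal.add_bot _
  · have h1 : (0:ℝ) < y⁻¹ * x := by positivity
    unfold elogr
    rw [if_neg (not_le.2 h1), if_neg (not_le.2 hxpos)]
    simp only [inv_one, EReal.coe_one, one_mul]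
    rw [← EReal.coe_add, EReal.coe_eq_coe_iff]
    rw [Real.log_mul (by positivity) hxpos.ne', Real.log_inv]
    ring

lemma eIntegral_elogr_le {μ : Measure ℝ} [IsProbabilityMeasure μ]
    (hsupp : μ (Set.Iio 0) = 0) (hint : Integrable (fun x => Real.log (1 + x)) μ)
    {r : ℝ} (hr : 0 < r) :
    eIntegral μ elogr ≤ ((∫ x, Real.log (x + r) ∂μ : ℝ) : EReal) := by
  rw [← eIntegral_coe (integrable_log_add hsupp hint hr)]
  unfold eIntegral
  refine EReal.sub_le_sub (EReal.coe_ennreal_le_coe_ennreal_iff.2 (lintegral_mono_ae ?_))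
    (EReal.coe_ennreal_le_coe_ennreal_iff.2 (lintegral_mono_ae ?_))
  · filter_upwards [ae_nonneg_of_Iio hsupp] with x hx
    unfold elogr
    by_cases hx0 : x ≤ 0
    · rw [if_pos hx0, erealToENNReal_bot]
      exact zero_le
    · rw [if_neg hx0, erealToENNReal_coe, erealToENNReal_coe]
      exact ENNReal.ofReal_le_ofReal
        (Real.log_le_log (not_le.1 hx0) (by linarith))
  · filter_upwards [ae_nonneg_of_Iio hsupp] with x hx
    unfold elogr
    by_cases hx0 : x ≤ 0
    · rw [if_pos hx0]
      simp only [EReal.neg_bot]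
      rw [erealToENNReal_top]
      exact le_top
    · rw [if_neg hx0, ← EReal.coe_neg, ← EReal.coe_neg, erealToENNReal_coe, erealToENNReal_coe]
      exact ENNReal.ofReal_le_ofReal
        (neg_le_neg (Real.log_le_log (not_le.1 hx0) (by linarith)))

lemma eIntegral_elogr {μ : Measure ℝ} [IsProbabilityMeasure μ]
    (hsupp : μ (Set.Iio 0) = 0) (hint : Integrable (fun x => Real.log (1 + x)) μ) :
    eIntegral μ elogr = ⨅ r : {r : ℝ // 0 < r}, ((∫ x, Real.log (x + r) ∂μ : ℝ) : EReal) := by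
  -- the sequence of radii
  set rn : ℕ → ℝ := fun n => 1 / (n + 1) with hrn
  have hrnpos : ∀ n, 0 < rn n := fun n => by positivity
  have hrnanti : ∀ ⦃n m : ℕ⦄, n ≤ m → rn m ≤ rn n := fun n m h => by
    apply one_div_le_one_div_of_le (by positivity)
    have : (n : ℝ) ≤ m := Nat.cast_le.2 h
    linarith
  have hrnle1 : ∀ n, rn n ≤ 1 := fun n => by
    rw [hrn]
    rw [div_le_one (by positivity)]
    have : (0:ℝ) ≤ n := Nat.cast_nonneg n
    linarith
  have hrn0 : Filter.Tendsto rn atTop (𝓝 0) := tendsto_one_div_add_atTop_nhds_zero_nat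
  -- integrability
  have hJint : ∀ {r : ℝ}, 0 < r → Integrable (fun x => Real.log (x + r)) μ :=
    fun {r} hr => integrable_log_add hsupp hint hr
  set A : ℕ → ℝ≥0∞ := fun n => ∫⁻ x, ENNReal.ofReal (Real.log (x + rn n)) ∂μ with hA
  set B : ℕ → ℝ≥0∞ := fun n => ∫⁻ x, ENNReal.ofReal (-Real.log (x + rn n)) ∂μ with hB
  have hAne : ∀ n, A n ≠ ⊤ := fun n => lintegral_ofReal_ne_top (hJint (hrnpos n))
  have hBne : ∀ n, B n ≠ ⊤ := fun n => lintegral_ofReal_ne_top (hJint (hrnpos n)).neg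
  have hmeasA : ∀ n, AEMeasurable (fun x => ENNReal.ofReal (Real.log (x + rn n))) μ :=
    fun n => (ENNReal.measurable_ofReal.comp
      (Real.measurable_log.comp (measurable_id.add_const _))).aemeasurable
  have hmeasB : ∀ n, AEMeasurable (fun x => ENNReal.ofReal (-Real.log (x + rn n))) μ :=
    fun n => (ENNReal.measurable_ofReal.comp
      ((Real.measurable_log.comp (measurable_id.add_const _)).neg)).aemeasurable
  -- pointwise antitonicity
  have hptanti : ∀ x : ℝ, 0 ≤ x → Antitone (fun n => ENNReal.ofReal (Real.log (x + rn n))) := by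
    intro x hx n m hnm
    exact ENNReal.ofReal_le_ofReal (Real.log_le_log (by have := hrnpos m; linarith)
      (by have := hrnanti hnm; linarith))
  have hptmono : ∀ x : ℝ, 0 ≤ x → Monotone (fun n => ENNReal.ofReal (-Real.log (x + rn n))) := by
    intro x hx n m hnm
    exact ENNReal.ofReal_le_ofReal (neg_le_neg (Real.log_le_log (by have := hrnpos m; linarith)
      (by have := hrnanti hnm; linarith)))
  -- L1 : positive part
  have hL1 : (∫⁻ x, erealToENNReal (elogr x) ∂μ) = ⨅ n, A n := by
    have h0 : (∫⁻ x, ENNReal.ofReal (Real.log (x + rn 0)) ∂μ) ≠ ⊤ := hAne 0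
    rw [← lintegral_iInf' hmeasA ((ae_nonneg_of_Iio hsupp).mono fun x hx => hptanti x hx) h0]
    refine lintegral_congr_ae ?_
    filter_upwards [ae_nonneg_of_Iio hsupp] with x hx
    rcases eq_or_lt_of_le hx with hx0 | hxpos
    · rw [← hx0]
      unfold elogr
      rw [if_pos le_rfl, erealToENNReal_bot]
      refine le_antisymm zero_le ?_
      refine le_trans (iInf_le _ 0) ?_
      have : Real.log (0 + rn 0) ≤ 0 := by
        rw [zero_add]
        exact Real.log_nonpos (hrnpos 0).le (hrnle1 0)
      rw [ENNReal.ofReal_eq_zero.2 this]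
    · unfold elogr
      rw [if_neg (not_le.2 hxpos), erealToENNReal_coe]
      have htd : Filter.Tendsto (fun n => ENNReal.ofReal (Real.log (x + rn n))) atTop
          (𝓝 (ENNReal.ofReal (Real.log x))) := by
        refine (ENNReal.continuous_ofReal.continuousAt).tendsto.comp ?_
        have harg : Filter.Tendsto (fun n => x + rn n) atTop (𝓝 x) := by
          have := tendsto_const_nhds (x := x) (f := atTop (α := ℕ)) |>.add hrn0
          simpa using this
        exact ((Real.continuousAt_log hxpos.ne').tendsto.comp harg)
      exact tendsto_nhds_unique (tendsto_atTop_iInf (hptanti x hx)) htd |>.symm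
  -- L2 : negative part
  have hL2 : (∫⁻ x, erealToENNReal (-elogr x) ∂μ) = ⨆ n, B n := by
    rw [← lintegral_iSup' hmeasB ((ae_nonneg_of_Iio hsupp).mono fun x hx => hptmono x hx)]
    refine lintegral_congr_ae ?_
    filter_upwards [ae_nonneg_of_Iio hsupp] with x hx
    rcases eq_or_lt_of_le hx with hx0 | hxpos
    · rw [← hx0]
      unfold elogr
      rw [if_pos le_rfl]
      simp only [EReal.neg_bot]
      rw [erealToENNReal_top]
      refine le_antisymm ?_ le_top
      have htd : Filter.Tendsto (fun n => ENNReal.ofReal (-Real.log (0 + rn n))) atTop (𝓝 ⊤) := by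
        refine ENNReal.tendsto_ofReal_atTop.comp ?_
        have : ∀ n : ℕ, -Real.log (0 + rn n) = Real.log (n + 1) := by
          intro n
          simp [hrn, Real.log_inv]
        simp only [this]
        exact Real.tendsto_log_atTop.comp
          (tendsto_atTop_add_const_right _ 1 tendsto_natCast_atTop_atTop)
      exact (tendsto_nhds_unique htd (tendsto_atTop_iSup (hptmono 0 le_rfl))).le
    · unfold elogr
      rw [if_neg (not_le.2 hxpos), ← EReal.coe_neg, erealToENNReal_coe]
      have htd : Filter.Tendsto (fun n => ENNReal.ofReal (-Real.log (x + rn n))) atTop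
          (𝓝 (ENNReal.ofReal (-Real.log x))) := by
        refine (ENNReal.continuous_ofReal.continuousAt).tendsto.comp ?_
        have harg : Filter.Tendsto (fun n => x + rn n) atTop (𝓝 x) := by
          have := tendsto_const_nhds (x := x) (f := atTop (α := ℕ)) |>.add hrn0
          simpa using this
        exact (((Real.continuousAt_log hxpos.ne').neg).tendsto.comp harg)
      exact tendsto_nhds_unique (tendsto_atTop_iSup (hptmono x hx)) htd |>.symm
  -- A antitone, B monotone
  have hAanti : Antitone A := fun n m hnm => lintegral_mono_ae
    ((ae_nonneg_of_Iio hsupp).mono fun x hx => hptanti x hx hnm)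
  have hBmono : Monotone B := fun n m hnm => lintegral_mono_ae
    ((ae_nonneg_of_Iio hsupp).mono fun x hx => hptmono x hx hnm)
  have hAinfne : (⨅ n, A n) ≠ ⊤ := ((iInf_le A 0).trans_lt (hAne 0).lt_top).ne
  -- J values
  set J : ℕ → ℝ := fun n => ∫ x, Real.log (x + rn n) ∂μ with hJ
  have hJeq : ∀ n, J n = (A n).toReal - (B n).toReal := by
    intro n
    rw [hJ]
    exact integral_eq_lintegral_pos_part_sub_lintegral_neg_part (hJint (hrnpos n))
  -- key identity
  have hkey : eIntegral μ elogr = ⨅ n, ((J n : ℝ) : EReal) := by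
    unfold eIntegral
    rw [hL1, hL2]
    by_cases hNtop : (⨆ n, B n) = ⊤
    · rw [hNtop]
      rw [EReal.coe_ennreal_top, EReal.sub_top]
      symm
      rw [iInf_eq_bot]
      intro b hb
      by_cases hbt : b = ⊤
      · exact ⟨0, hbt ▸ EReal.coe_lt_top _⟩
      · obtain ⟨t, rfl⟩ : ∃ t : ℝ, b = (t : EReal) :=
          ⟨b.toReal, (EReal.coe_toReal hbt (ne_of_gt hb)).symm⟩
        obtain ⟨n, hn⟩ := iSup_eq_top.1 hNtop (ENNReal.ofReal ((A 0).toReal - t))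
          ENNReal.ofReal_lt_top
        refine ⟨n, ?_⟩
        rw [EReal.coe_lt_coe_iff, hJeq n]
        have h1 : (A n).toReal ≤ (A 0).toReal :=
          ENNReal.toReal_mono (hAne 0) (hAanti (Nat.zero_le n))
        have h2 : (A 0).toReal - t < (B n).toReal := by
          have h5 := (ENNReal.toReal_lt_toReal ENNReal.ofReal_ne_top (hBne n)).2 hn
          have h3 : (A 0).toReal - t ≤ (ENNReal.ofReal ((A 0).toReal - t)).toReal := by
            rcases le_total 0 ((A 0).toReal - t) with h | h
            · rw [ENNReal.toReal_ofReal h]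
            · exact h.trans ENNReal.toReal_nonneg
          linarith
        linarith
    · -- finite case
      set L : ℝ := (⨅ n, A n).toReal - (⨆ n, B n).toReal with hL
      rw [coe_ennreal_sub_eq hAinfne hNtop]
      have hAtd : Filter.Tendsto (fun n => (A n).toReal) atTop (𝓝 ((⨅ n, A n).toReal)) :=
        (ENNReal.tendsto_toReal hAinfne).comp (tendsto_atTop_iInf hAanti)
      have hBtd : Filter.Tendsto (fun n => (B n).toReal) atTop (𝓝 ((⨆ n, B n).toReal)) :=
        (ENNReal.tendsto_toReal hNtop).comp (tendsto_atTop_iSup hBmono)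
      have hJtd : Filter.Tendsto J atTop (𝓝 L) := by
        simp only [funext hJeq]
        exact hAtd.sub hBtd
      have hJanti : Antitone J := by
        intro n m hnm
        rw [hJeq n, hJeq m]
        have h1 : (A m).toReal ≤ (A n).toReal := ENNReal.toReal_mono (hAne n) (hAanti hnm)
        have h2 : (B n).toReal ≤ (B m).toReal := ENNReal.toReal_mono (hBne m) (hBmono hnm)
        linarith
      have hJlb : ∀ n, L ≤ J n := by
        intro n
        rw [hJeq n]
        have h1 : (⨅ k, A k).toReal ≤ (A n).toReal :=
          ENNReal.toReal_mono (hAne n) (iInf_le A n)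
        have h2 : (B n).toReal ≤ (⨆ k, B k).toReal :=
          ENNReal.toReal_mono hNtop (le_iSup B n)
        rw [hL]
        linarith
      have hbdd : BddBelow (Set.range J) := ⟨L, fun z hz => by obtain ⟨n, rfl⟩ := hz; exact hJlb n⟩
      have hciInf : (⨅ n, J n) = L :=
        tendsto_nhds_unique (tendsto_atTop_ciInf hJanti hbdd) hJtd
      rw [ereal_iInf_coe hbdd, hciInf]
  -- conclude
  refine le_antisymm (le_iInf fun r => eIntegral_elogr_le hsupp hint r.2) ?_
  rw [hkey]
  exact le_iInf fun n => iInf_le _ (⟨rn n, hrnpos n⟩ : {r : ℝ // 0 < r})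

lemma part1_one {μ : Measure ℝ} [IsProbabilityMeasure μ]
    (hsupp : μ (Set.Iio 0) = 0) (hint : Integrable (fun x => Real.log (1 + x)) μ) :
    hsBary 1 μ = ENNReal.ofReal (hsB 1 *
      ⨅ r : {r : ℝ // 0 < r},
        (r : ℝ) ^ (-(1 - 1) / 1 : ℝ) * Real.exp ((1:ℝ)⁻¹ * ∫ x, Real.log (x + r) ∂μ)) := by
  have : Nonempty {y : ℝ // 0 < y} := ⟨⟨1, one_pos⟩⟩
  have h1 : hsBary 1 μ = eexp (eIntegral μ elogr) := by
    rw [hsBary]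
    congr 1
    rw [iInf_congr (fun y : {y : ℝ // 0 < y} => eIntegral_congr_ae
      ((ae_nonneg_of_Iio hsupp).mono fun x hx => hsKernel_one y.2 hx) :
      ∀ y : {y : ℝ // 0 < y}, eIntegral μ (fun x => hsKernel 1 x y) = eIntegral μ elogr)]
    exact iInf_const
  rw [h1, eIntegral_elogr hsupp hint,
    eexp_iInf (F := fun r : {r : ℝ // 0 < r} => ∫ x, Real.log (x + r) ∂μ)]
  congr 1
  rw [hsB, if_neg one_ne_zero, if_pos rfl, one_mul]
  refine iInf_congr fun r => ?_
  rw [show (-(1 - 1) / 1 : ℝ) = 0 by norm_num, Real.rpow_zero, one_mul, inv_one, one_mul]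

section Part2
variable {μ : Measure ℝ} [IsProbabilityMeasure μ]

lemma integrable_div_add (hsupp : μ (Set.Iio 0) = 0) {t : ℝ} (ht : 0 < t) :
    Integrable (fun x => x / (x + t)) μ := by
  refine Integrable.mono' (integrable_const 1)
    ((measurable_id.div (measurable_id.add_const t)).aestronglyMeasurable) ?_
  filter_upwards [ae_nonneg_of_Iio hsupp] with x hx
  rw [Real.norm_eq_abs, abs_of_nonneg (div_nonneg hx (by linarith))]
  rw [div_le_one (by linarith)]
  linarith

lemma integrable_inv_add (hsupp : μ (Set.Iio 0) = 0) {t : ℝ} (ht : 0 < t) :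
    Integrable (fun x => (x + t)⁻¹) μ := by
  refine Integrable.mono' (integrable_const t⁻¹)
    (((measurable_id.add_const t).inv).aestronglyMeasurable) ?_
  filter_upwards [ae_nonneg_of_Iio hsupp] with x hx
  rw [Real.norm_eq_abs, abs_of_nonneg (inv_nonneg.2 (by linarith))]
  exact inv_anti₀ ht (by linarith)

lemma phi_antitone (hsupp : μ (Set.Iio 0) = 0) {t s : ℝ} (ht : 0 < t) (hts : t ≤ s) :
    (∫ x, x / (x + s) ∂μ) ≤ ∫ x, x / (x + t) ∂μ := by
  refine integral_mono_ae (integrable_div_add hsupp (by linarith)) (integrable_div_add hsupp ht) ?_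
  filter_upwards [ae_nonneg_of_Iio hsupp] with x hx
  rcases eq_or_lt_of_le hx with h0 | hpos
  · simp [← h0]
  · exact div_le_div_of_nonneg_left hx (by linarith) (by linarith)

lemma phi_continuousAt (hsupp : μ (Set.Iio 0) = 0) {t₀ : ℝ} (ht : 0 < t₀) :
    ContinuousAt (fun t => ∫ x, x / (x + t) ∂μ) t₀ := by
  refine continuousAt_of_dominated (bound := fun _ => (1:ℝ)) ?_ ?_ (integrable_const 1) ?_
  · exact Filter.Eventually.of_forall fun t =>
      (measurable_id.div (measurable_id.add_const t)).aestronglyMeasurable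
  · have hev : ∀ᶠ t in 𝓝 t₀, 0 < t := eventually_gt_nhds ht
    filter_upwards [hev] with t htpos
    filter_upwards [ae_nonneg_of_Iio hsupp] with x hx
    rw [Real.norm_eq_abs, abs_of_nonneg (div_nonneg hx (by linarith))]
    rw [div_le_one (by linarith)]
    linarith
  · filter_upwards [ae_nonneg_of_Iio hsupp] with x hx
    have hne : x + t₀ ≠ 0 := by positivity
    exact (continuousAt_const.div (continuousAt_const.add continuousAt_id) hne)

lemma fubini_J (hsupp : μ (Set.Iio 0) = 0) (hint : Integrable (fun x => Real.log (1 + x)) μ)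
    {u v : ℝ} (hu : 0 < u) (huv : u ≤ v) :
    (∫ x, Real.log (x + v) ∂μ) - (∫ x, Real.log (x + u) ∂μ)
      = ∫ t in u..v, (∫ x, (x + t)⁻¹ ∂μ) := by
  have hv : 0 < v := lt_of_lt_of_le hu huv
  set ν : Measure ℝ := volume.restrict (Set.Ioc u v) with hν
  have : IsFiniteMeasure ν := ⟨by
    rw [Measure.restrict_apply_univ]
    exact measure_Ioc_lt_top⟩
  -- integrability on the product
  have hprod : Integrable (Function.uncurry (fun x t => (x + t)⁻¹)) (μ.prod ν) := by
    refine Integrable.mono' (integrable_const u⁻¹)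
      (((measurable_fst.add measurable_snd).inv).aestronglyMeasurable) ?_
    have h1 : ∀ᵐ p ∂(μ.prod ν), 0 ≤ p.1 := by
      rw [ae_iff]
      have hset : {p : ℝ × ℝ | ¬ 0 ≤ p.1} = (Set.Iio 0) ×ˢ (Set.univ : Set ℝ) := by
        ext p; simp [not_le]
      rw [hset, Measure.prod_prod, hsupp, zero_mul]
    have h2 : ∀ᵐ p ∂(μ.prod ν), p.2 ∈ Set.Ioc u v := by
      rw [ae_iff]
      have hset : {p : ℝ × ℝ | ¬ p.2 ∈ Set.Ioc u v} = (Set.univ : Set ℝ) ×ˢ (Set.Ioc u v)ᶜ := by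
        ext p; simp
      rw [hset, Measure.prod_prod, hν, Measure.restrict_apply measurableSet_Ioc.compl,
        Set.compl_inter_self, measure_empty, mul_zero]
    filter_upwards [h1, h2] with p hp1 hp2
    rw [Function.uncurry, Real.norm_eq_abs,
      abs_of_nonneg (inv_nonneg.2 (by have := hp2.1; linarith))]
    exact inv_anti₀ hu (by have := hp2.1; linarith)
  -- pointwise FTC
  have hptw : ∀ᵐ x ∂μ, Real.log (x + v) - Real.log (x + u) = ∫ t in u..v, (x + t)⁻¹ := by
    filter_upwards [ae_nonneg_of_Iio hsupp] with x hx
    rw [intervalIntegral.integral_comp_add_left (fun s => s⁻¹) x,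
      integral_inv_of_pos (by linarith) (by linarith),
      Real.log_div (by positivity) (by positivity)]
  have hswap := integral_integral_swap hprod
  have hJint : ∀ {r : ℝ}, 0 < r → Integrable (fun x => Real.log (x + r)) μ :=
    fun {r} hr => integrable_log_add hsupp hint hr
  calc (∫ x, Real.log (x + v) ∂μ) - (∫ x, Real.log (x + u) ∂μ)
      = ∫ x, (Real.log (x + v) - Real.log (x + u)) ∂μ :=
        (integral_sub (hJint hv) (hJint hu)).symm
    _ = ∫ x, (∫ t in u..v, (x + t)⁻¹) ∂μ := integral_congr_ae hptw
    _ = ∫ x, (∫ t, (x + t)⁻¹ ∂ν) ∂μ := by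
        refine integral_congr_ae (Filter.Eventually.of_forall fun x => ?_)
        show (∫ t in u..v, (x + t)⁻¹) = ∫ t, (x + t)⁻¹ ∂ν
        rw [intervalIntegral.integral_of_le huv]
    _ = ∫ t, (∫ x, (x + t)⁻¹ ∂μ) ∂ν := hswap
    _ = ∫ t in u..v, (∫ x, (x + t)⁻¹ ∂μ) := (intervalIntegral.integral_of_le huv).symm

lemma phi_Phi (hsupp : μ (Set.Iio 0) = 0) {t : ℝ} (ht : 0 < t) :
    (∫ x, (x + t)⁻¹ ∂μ) = (1 - ∫ x, x / (x + t) ∂μ) / t := by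
  have h1 : (∫ x, x / (x + t) ∂μ) = ∫ x, (1 - t * (x + t)⁻¹) ∂μ := by
    refine integral_congr_ae ?_
    filter_upwards [ae_nonneg_of_Iio hsupp] with x hx
    have hne : x + t ≠ 0 := by positivity
    field_simp
    ring
  rw [h1, integral_sub (integrable_const 1) ((integrable_inv_add hsupp ht).const_mul t),
    integral_const, integral_const_mul]
  simp only [probReal_univ, smul_eq_mul, one_mul]
  field_simp
  ring

end Part2

section Part2b
variable {μ : Measure ℝ} [IsProbabilityMeasure μ]

lemma phi_tendsto_zero (hsupp : μ (Set.Iio 0) = 0) :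
    Filter.Tendsto (fun t => ∫ x, x / (x + t) ∂μ) (𝓝[>] (0:ℝ))
      (𝓝 ((μ ({(0:ℝ)}ᶜ)).toReal)) := by
  have hmain : Filter.Tendsto (fun t => ∫ x, x / (x + t) ∂μ) (𝓝[>] (0:ℝ))
      (𝓝 (∫ x, Set.indicator ({(0:ℝ)}ᶜ) (fun _ => (1:ℝ)) x ∂μ)) := by
    refine tendsto_integral_filter_of_dominated_convergence (fun _ => (1:ℝ))
      (Filter.Eventually.of_forall fun t =>
        (measurable_id.div (measurable_id.add_const t)).aestronglyMeasurable) ?_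
      (integrable_const 1) ?_
    · filter_upwards [self_mem_nhdsWithin] with t ht
      filter_upwards [ae_nonneg_of_Iio hsupp] with x hx
      have htpos : (0:ℝ) < t := ht
      rw [Real.norm_eq_abs, abs_of_nonneg (div_nonneg hx (by linarith))]
      rw [div_le_one (by linarith)]
      linarith
    · filter_upwards [ae_nonneg_of_Iio hsupp] with x hx
      rcases eq_or_lt_of_le hx with h0 | hpos
      · have hfn : (fun t : ℝ => x / (x + t)) = fun t => 0 / (0 + t) := by rw [← h0]
        rw [hfn]
        have : Set.indicator ({(0:ℝ)}ᶜ) (fun _ => (1:ℝ)) x = 0 := by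
          rw [← h0]
          simp
        rw [this]
        have : (fun t : ℝ => 0 / (0 + t)) = fun _ : ℝ => (0:ℝ) := by
          funext t; simp
        rw [this]
        exact tendsto_const_nhds
      · have hval : Set.indicator ({(0:ℝ)}ᶜ) (fun _ => (1:ℝ)) x = 1 :=
          Set.indicator_of_mem (by simp [hpos.ne']) _
        rw [hval]
        have hca : ContinuousAt (fun t : ℝ => x / (x + t)) 0 :=
          continuousAt_const.div (continuousAt_const.add continuousAt_id) (by simp [hpos.ne'])
        have h2 := hca.tendsto.mono_left (nhdsWithin_le_nhds (s := Set.Ioi (0:ℝ)))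
        simpa [div_self hpos.ne'] using h2
  have : (∫ x, Set.indicator ({(0:ℝ)}ᶜ) (fun _ => (1:ℝ)) x ∂μ) = (μ ({(0:ℝ)}ᶜ)).toReal := by
    rw [show (fun _ : ℝ => (1:ℝ)) = (1 : ℝ → ℝ) from rfl]
    exact integral_indicator_one (measurableSet_singleton 0).compl
  rwa [this] at hmain

lemma phi_tendsto_atTop (hsupp : μ (Set.Iio 0) = 0) :
    Filter.Tendsto (fun t => ∫ x, x / (x + t) ∂μ) atTop (𝓝 0) := by
  have hmain : Filter.Tendsto (fun t => ∫ x, x / (x + t) ∂μ) atTop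
      (𝓝 (∫ _x, (0:ℝ) ∂μ)) := by
    refine tendsto_integral_filter_of_dominated_convergence (fun _ => (1:ℝ))
      (Filter.Eventually.of_forall fun t =>
        (measurable_id.div (measurable_id.add_const t)).aestronglyMeasurable) ?_
      (integrable_const 1) ?_
    · filter_upwards [Filter.eventually_gt_atTop 0] with t ht
      filter_upwards [ae_nonneg_of_Iio hsupp] with x hx
      rw [Real.norm_eq_abs, abs_of_nonneg (div_nonneg hx (by linarith))]
      rw [div_le_one (by linarith)]
      linarith
    · filter_upwards [ae_nonneg_of_Iio hsupp] with x hx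
      exact Filter.Tendsto.div_atTop tendsto_const_nhds
        (tendsto_atTop_add_const_left _ x tendsto_id)
  simpa using hmain

end Part2b

section Part2c
variable {μ : Measure ℝ} [IsProbabilityMeasure μ]

lemma exists_root (hsupp : μ (Set.Iio 0) = 0)
    {c : ℝ} (hc0 : 0 < c) (hc1 : c < 1) (hμ0 : μ {0} < ENNReal.ofReal (1 - c)) :
    ∃ ρ : ℝ, 0 < ρ ∧ (∫ x, x / (x + ρ) ∂μ) = c := by
  set φ : ℝ → ℝ := fun t => ∫ x, x / (x + t) ∂μ with hφ
  -- limit at zero exceeds c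
  have hμ0' : (μ {(0:ℝ)}).toReal < 1 - c := ENNReal.toReal_lt_of_lt_ofReal hμ0
  have hcompl : (μ ({(0:ℝ)}ᶜ)).toReal = 1 - (μ {(0:ℝ)}).toReal := by
    rw [prob_compl_eq_one_sub (measurableSet_singleton 0)]
    rw [ENNReal.toReal_sub_of_le prob_le_one ENNReal.one_ne_top, ENNReal.toReal_one]
  have hL0 : c < (μ ({(0:ℝ)}ᶜ)).toReal := by rw [hcompl]; linarith
  have hev0 : ∀ᶠ t in 𝓝[>] (0:ℝ), c < φ t :=
    (phi_tendsto_zero hsupp).eventually (eventually_gt_nhds hL0)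
  obtain ⟨a, hac, ha0⟩ := (hev0.and self_mem_nhdsWithin).exists
  have ha0 : (0:ℝ) < a := ha0
  -- eventually below c at infinity
  have hevtop : ∀ᶠ t in atTop, φ t < c :=
    (phi_tendsto_atTop hsupp).eventually (eventually_lt_nhds hc0)
  obtain ⟨b, hbc, hab⟩ := (hevtop.and (Filter.eventually_gt_atTop a)).exists
  -- IVT
  have hcont : ContinuousOn φ (Set.Icc a b) := fun t ht =>
    (phi_continuousAt hsupp (lt_of_lt_of_le ha0 ht.1)).continuousWithinAt
  have hmem : c ∈ Set.Icc (φ b) (φ a) := ⟨hbc.le, hac.le⟩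
  obtain ⟨ρ, hρmem, hρval⟩ := intermediate_value_Icc' hab.le hcont hmem
  exact ⟨ρ, lt_of_lt_of_le ha0 hρmem.1, hρval⟩

lemma root_unique (hsupp : μ (Set.Iio 0) = 0)
    {c : ℝ} (hc0 : 0 < c) (hc1 : c < 1) (hμ0 : μ {0} < ENNReal.ofReal (1 - c))
    {u v : ℝ} (hu : 0 < u) (hv : 0 < v)
    (hφu : (∫ x, x / (x + u) ∂μ) = c) (hφv : (∫ x, x / (x + v) ∂μ) = c) : u = v := by
  -- general claim
  have key : ∀ s t : ℝ, 0 < s → s < t →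
      (∫ x, x / (x + s) ∂μ) = c → (∫ x, x / (x + t) ∂μ) = c → False := by
    intro s t hs hst hφs hφt
    have ht : 0 < t := lt_trans hs hst
    set g : ℝ → ℝ := fun x => x / (x + s) - x / (x + t) with hg
    have hgi : Integrable g μ :=
      (integrable_div_add hsupp hs).sub (integrable_div_add hsupp ht)
    have hg0 : 0 ≤ᵐ[μ] g := by
      filter_upwards [ae_nonneg_of_Iio hsupp] with x hx
      rcases eq_or_lt_of_le hx with h0 | hpos
      · simp [hg, ← h0]
      · have := div_le_div_of_nonneg_left hx (by linarith : (0:ℝ) < x + s)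
          (by linarith : x + s ≤ x + t)
        simp only [hg, Pi.zero_apply]
        linarith
    have hgint : (∫ x, g x ∂μ) = 0 := by
      rw [hg]
      rw [integral_sub (integrable_div_add hsupp hs) (integrable_div_add hsupp ht)]
      rw [hφs, hφt, sub_self]
    have hgz := (integral_eq_zero_iff_of_nonneg_ae hg0 hgi).1 hgint
    have hae0 : ∀ᵐ x ∂μ, x = 0 := by
      filter_upwards [ae_nonneg_of_Iio hsupp, hgz] with x hx hgx
      by_contra hxne
      have hpos : 0 < x := lt_of_le_of_ne hx (Ne.symm hxne)
      have hlt : x / (x + t) < x / (x + s) :=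
        (div_lt_div_iff_of_pos_left hpos (by linarith) (by linarith)).2 (by linarith)
      have : g x = 0 := hgx
      rw [hg] at this
      simp only at this
      linarith
    have hone : (1:ℝ≥0∞) ≤ μ {0} := by
      have hcompl0 : μ ({(0:ℝ)}ᶜ) = 0 := by
        have h := ae_iff.1 hae0
        have hseteq : {x : ℝ | ¬ x = 0} = ({(0:ℝ)} : Set ℝ)ᶜ := by ext x; simp
        rw [← hseteq]
        exact h
      have := measure_union_le (μ := μ) ({(0:ℝ)}) ({(0:ℝ)}ᶜ)
      rw [Set.union_compl_self, measure_univ, hcompl0, add_zero] at this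
      exact this
    have hlt1 : μ {(0:ℝ)} < 1 :=
      lt_of_lt_of_le hμ0 (by
        rw [← ENNReal.ofReal_one]
        exact ENNReal.ofReal_le_ofReal (by linarith))
    exact absurd hone (not_le.2 hlt1)
  rcases lt_trichotomy u v with h | h | h
  · exact absurd (key u v hu h hφu hφv) (fun f => f)
  · exact h
  · exact absurd (key v u hv h hφv hφu) (fun f => f)

end Part2c

section Part2d
variable {μ : Measure ℝ} [IsProbabilityMeasure μ]

lemma J_ineq (hsupp : μ (Set.Iio 0) = 0) (hint : Integrable (fun x => Real.log (1 + x)) μ)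
    {c ρ r : ℝ} (hc0 : 0 < c) (hc1 : c < 1) (hρ : 0 < ρ) (hr : 0 < r)
    (hval : (∫ x, x / (x + ρ) ∂μ) = c) :
    (∫ x, Real.log (x + ρ) ∂μ) - (1 - c) * Real.log ρ ≤
      (∫ x, Real.log (x + r) ∂μ) - (1 - c) * Real.log r := by
  set Φ : ℝ → ℝ := fun t => ∫ x, (x + t)⁻¹ ∂μ with hΦ
  have hΦanti : ∀ {t s : ℝ}, 0 < t → t ≤ s → Φ s ≤ Φ t := by
    intro t s ht hts
    refine integral_mono_ae (integrable_inv_add hsupp (by linarith))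
      (integrable_inv_add hsupp ht) ?_
    filter_upwards [ae_nonneg_of_Iio hsupp] with x hx
    exact inv_anti₀ (by linarith) (by linarith)
  have hIIΦ : ∀ {u v : ℝ}, 0 < u → u ≤ v → IntervalIntegrable Φ volume u v := by
    intro u v hu huv
    refine AntitoneOn.intervalIntegrable ?_
    rw [Set.uIcc_of_le huv]
    intro x hx y hy hxy
    exact hΦanti (lt_of_lt_of_le hu hx.1) hxy
  have hIIinv : ∀ {u v : ℝ}, 0 < u → u ≤ v →
      IntervalIntegrable (fun t => (1 - c) * t⁻¹) volume u v := by
    intro u v hu huv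
    refine ContinuousOn.intervalIntegrable ?_
    refine continuousOn_const.mul (ContinuousOn.inv₀ continuousOn_id fun x hx => ?_)
    rw [Set.uIcc_of_le huv] at hx
    exact ne_of_gt (lt_of_lt_of_le hu hx.1)
  have hconstint : ∀ {u v : ℝ}, 0 < u → u ≤ v →
      (∫ t in u..v, (1 - c) * t⁻¹) = (1 - c) * (Real.log v - Real.log u) := by
    intro u v hu huv
    rw [intervalIntegral.integral_const_mul, integral_inv_of_pos hu (by linarith),
      Real.log_div (by linarith : (0:ℝ) < v).ne' hu.ne']
  rcases le_total ρ r with hρr | hrρ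
  · have hJd := fubini_J hsupp hint hρ hρr
    have hpt : ∀ t ∈ Set.Icc ρ r, (1 - c) * t⁻¹ ≤ Φ t := by
      intro t htm
      have htpos : 0 < t := lt_of_lt_of_le hρ htm.1
      have hφle : (∫ x, x / (x + t) ∂μ) ≤ c := hval ▸ phi_antitone hsupp hρ htm.1
      rw [hΦ]
      simp only []
      rw [phi_Phi hsupp htpos, div_eq_mul_inv]
      exact mul_le_mul_of_nonneg_right (by linarith) (inv_nonneg.2 htpos.le)
    have hmono := intervalIntegral.integral_mono_on hρr (hIIinv hρ hρr) (hIIΦ hρ hρr) hpt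
    rw [hconstint hρ hρr] at hmono
    rw [← hJd] at hmono
    linarith
  · have hJd := fubini_J hsupp hint hr hrρ
    have hpt : ∀ t ∈ Set.Icc r ρ, Φ t ≤ (1 - c) * t⁻¹ := by
      intro t htm
      have htpos : 0 < t := lt_of_lt_of_le hr htm.1
      have hφge : c ≤ (∫ x, x / (x + t) ∂μ) := hval ▸ phi_antitone hsupp htpos htm.2
      rw [hΦ]
      simp only []
      rw [phi_Phi hsupp htpos, div_eq_mul_inv]
      exact mul_le_mul_of_nonneg_right (by linarith) (inv_nonneg.2 htpos.le)
    have hmono := intervalIntegral.integral_mono_on hrρ (hIIΦ hr hrρ) (hIIinv hr hrρ) hpt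
    rw [hconstint hr hrρ] at hmono
    rw [← hJd] at hmono
    linarith

lemma g_min (hsupp : μ (Set.Iio 0) = 0) (hint : Integrable (fun x => Real.log (1 + x)) μ)
    {c ρ r : ℝ} (hc0 : 0 < c) (hc1 : c < 1) (hρ : 0 < ρ) (hr : 0 < r)
    (hval : (∫ x, x / (x + ρ) ∂μ) = c) :
    ρ ^ (-(1 - c) / c) * Real.exp (c⁻¹ * ∫ x, Real.log (x + ρ) ∂μ) ≤
      r ^ (-(1 - c) / c) * Real.exp (c⁻¹ * ∫ x, Real.log (x + r) ∂μ) := by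
  have hJle := J_ineq hsupp hint hc0 hc1 hρ hr hval
  rw [Real.rpow_def_of_pos hρ, Real.rpow_def_of_pos hr, ← Real.exp_add, ← Real.exp_add,
    Real.exp_le_exp]
  have h2 := mul_le_mul_of_nonneg_left hJle (inv_nonneg.2 hc0.le)
  have hid : ∀ J L : ℝ, L * (-(1 - c) / c) + c⁻¹ * J = c⁻¹ * (J - (1 - c) * L) := by
    intro J L
    field_simp
    ring
  rw [hid, hid]
  exact h2

end Part2d


/-- the alternative formula for the HS barycenter, and the attainment of the
infimum in the subcritical case. -/
theorem hsBary_oldstyle (c : ℝ) (hc : c ∈ Set.Ioc (0 : ℝ) 1) (μ : Measure ℝ)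
    [IsProbabilityMeasure μ] (hsupp : μ (Set.Iio 0) = 0)
    (hint : Integrable (fun x => Real.log (1 + x)) μ) :
    hsBary c μ =
      ENNReal.ofReal (hsB c *
        ⨅ r : {r : ℝ // 0 < r},
          (r : ℝ) ^ (-(1 - c) / c) * Real.exp (c⁻¹ * ∫ x, Real.log (x + r) ∂μ)) ∧
    (μ {0} < ENNReal.ofReal (1 - c) →
      ∃ ρ : ℝ, 0 < ρ ∧ (∫ x, x / (x + ρ) ∂μ) = c ∧
        (∀ ρ' : ℝ, 0 < ρ' → (∫ x, x / (x + ρ') ∂μ) = c → ρ' = ρ) ∧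
        ρ ^ (-(1 - c) / c) * Real.exp (c⁻¹ * ∫ x, Real.log (x + ρ) ∂μ) =
          ⨅ r : {r : ℝ // 0 < r},
            (r : ℝ) ^ (-(1 - c) / c) * Real.exp (c⁻¹ * ∫ x, Real.log (x + r) ∂μ)) := by
  obtain ⟨hc0, hc1⟩ := hc
  constructor
  · rcases eq_or_lt_of_le hc1 with h1 | h1
    · subst h1
      exact part1_one hsupp hint
    · exact part1_lt hsupp hint hc0 h1
  · intro hμ0
    have hc1lt : c < 1 := by
      rcases eq_or_lt_of_le hc1 with h1 | h1
      · exfalso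
        subst h1
        simp at hμ0
      · exact h1
    obtain ⟨ρ, hρpos, hρval⟩ := exists_root hsupp hc0 hc1lt hμ0
    refine ⟨ρ, hρpos, hρval, ?_, ?_⟩
    · intro ρ' hρ' hval'
      exact root_unique hsupp hc0 hc1lt hμ0 hρ' hρpos hval' hρval
    · have : Nonempty {r : ℝ // 0 < r} := ⟨⟨1, one_pos⟩⟩
      refine le_antisymm (le_ciInf fun r => g_min hsupp hint hc0 hc1lt hρpos r.2 hρval)
        (ciInf_le ?_ (⟨ρ, hρpos⟩ : {r : ℝ // 0 < r}))
      refine ⟨0, ?_⟩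
      rintro z ⟨r, rfl⟩
      have hrp : (0:ℝ) < (r:ℝ) ^ (-(1-c)/c) := Real.rpow_pos_of_pos r.2 _
      positivity
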